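/- Minimax equality for the logarithmic-utility integrand: let σ̂ > 0 satisfy σ̂⁴ − σ0·σ̂³ − (μ−r)²/(2λ0) = 0 and set α̂ = (μ−r)/σ̂². Then, as extended real numbers, sup_{α∈ℝ} inf_{σ∈ℝ} h(α,σ) = inf_{σ∈ℝ} sup_{α∈ℝ} h(α,σ) = h(α̂, σ̂). -/
import Mathlib


/-- Minimax equality for the logarithmic-utility integrand: with `σ̂ > 0` solving
`σ̂⁴ − σ0·σ̂³ − (μ−r)²/(2lam0) = 0` and `α̂ = (μ−r)/σ̂²`, one has, in the extended reals,
`sup_α inf_σ h(α,σ) = inf_σ sup_α h(α,σ) = h(α̂,σ̂)`. -/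
theorem minimax_log_utility (μ r lam0 σ0 : ℝ) (hμr : μ ≠ r)
    (hlam0 : 0 < lam0) (hσ0 : 0 ≤ σ0)
    (h : ℝ → ℝ → ℝ)
    (hh : ∀ α σ, h α σ = α * (μ - r) + r - (1 / 2) * α ^ 2 * σ ^ 2
        + lam0 * (σ - σ0) ^ 2)
    (σhat αhat : ℝ) (hσhat : 0 < σhat)
    (hquartic : σhat ^ 4 - σ0 * σhat ^ 3 - (μ - r) ^ 2 / (2 * lam0) = 0)
    (hαhat : αhat = (μ - r) / σhat ^ 2) :
    (⨆ α : ℝ, ⨅ σ : ℝ, (h α σ : EReal)) = (⨅ σ : ℝ, ⨆ α : ℝ, (h α σ : EReal)) ∧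
    (⨆ α : ℝ, ⨅ σ : ℝ, (h α σ : EReal)) = (h αhat σhat : EReal) := by
  have hσ2 : (σhat : ℝ) ^ 2 ≠ 0 := pow_ne_zero _ hσhat.ne'
  -- α̂ σ̂² = μ − r
  have hα2 : αhat * σhat ^ 2 = μ - r := by
    rw [hαhat]; field_simp
  -- (μ−r)² = 2 λ0 (σ̂⁴ − σ0 σ̂³)
  have hq : (μ - r) ^ 2 = 2 * lam0 * (σhat ^ 4 - σ0 * σhat ^ 3) := by
    have := hquartic
    field_simp at this
    linarith
  -- fact 1 : σ̂ minimizes h(α̂, ·)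
  have fact1 : ∀ σ : ℝ, h αhat σhat ≤ h αhat σ := by
    intro σ
    rw [hh, hh]
    -- α̂² σ̂ = 2 λ0 (σ̂ − σ0)
    have key : αhat ^ 2 * σhat = 2 * lam0 * (σhat - σ0) := by
      have h4 : αhat ^ 2 * σhat ^ 4 = (μ - r) ^ 2 := by
        rw [← hα2]; ring
      have h5 : (αhat ^ 2 * σhat) * σhat ^ 3 = (2 * lam0 * (σhat - σ0)) * σhat ^ 3 := by
        rw [show (αhat ^ 2 * σhat) * σhat ^ 3 = αhat ^ 2 * σhat ^ 4 by ring, h4, hq]; ring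
      exact mul_right_cancel₀ (pow_ne_zero _ hσhat.ne') h5
    have expand : σhat * ((lam0 * (σ - σ0) ^ 2 - lam0 * (σhat - σ0) ^ 2)
        - (1 / 2) * αhat ^ 2 * (σ ^ 2 - σhat ^ 2)) = lam0 * σ0 * (σ - σhat) ^ 2 := by
      linear_combination (-(1 / 2) * (σ ^ 2 - σhat ^ 2)) * key
    nlinarith [expand, mul_nonneg (mul_nonneg hlam0.le hσ0) (sq_nonneg (σ - σhat)), hσhat]
  -- fact 2 : α̂ maximizes h(·, σ̂)
  have fact2 : ∀ α : ℝ, h α σhat ≤ h αhat σhat := by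
    intro α
    rw [hh, hh, ← hα2]
    nlinarith [mul_nonneg (sq_nonneg σhat) (sq_nonneg (α - αhat))]
  -- EReal consequences
  have hinf : (⨅ σ : ℝ, (h αhat σ : EReal)) = (h αhat σhat : EReal) := by
    apply le_antisymm (iInf_le _ σhat)
    exact le_iInf fun σ => EReal.coe_le_coe_iff.2 (fact1 σ)
  have hsup : (⨆ α : ℝ, (h α σhat : EReal)) = (h αhat σhat : EReal) := by
    apply le_antisymm (iSup_le fun α => EReal.coe_le_coe_iff.2 (fact2 α))
    exact le_iSup (fun α => ((h α σhat : EReal))) αhat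
  have minimax : (⨆ α : ℝ, ⨅ σ : ℝ, (h α σ : EReal)) ≤
      (⨅ σ : ℝ, ⨆ α : ℝ, (h α σ : EReal)) :=
    iSup_le fun α => le_iInf fun σ => (iInf_le _ σ).trans (le_iSup (fun a => ((h a σ : EReal))) α)
  have h1 : (h αhat σhat : EReal) ≤ ⨆ α : ℝ, ⨅ σ : ℝ, (h α σ : EReal) :=
    hinf ▸ le_iSup (fun α => ⨅ σ : ℝ, ((h α σ : EReal))) αhat
  have h2 : (⨅ σ : ℝ, ⨆ α : ℝ, (h α σ : EReal)) ≤ (h αhat σhat : EReal) :=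
    hsup ▸ iInf_le (fun σ => ⨆ α : ℝ, ((h α σ : EReal))) σhat
  constructor
  · exact le_antisymm minimax (h2.trans h1)
  · exact le_antisymm (minimax.trans h2) h1
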